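/- Eisfeld–Metsch special case: f(4,q) ≤ q⁴ + 2q² + q + 1, where f(4,q) is the minimum size of a set of 2-dimensional subspaces of F_q⁵ such that every 3-dimensional subspace of F_q⁵ contains a member of the set. -/

import Mathlib

set_option linter.unusedSectionVars false
set_option maxHeartbeats 1000000
section EMall
open Polynomial Module Submodule Finset

theorem exists_quad_ext (F : Type) [Field F] [Fintype F] :
    ∃ (K : Type) (_ : Field K) (_ : Algebra F K) (_ : Fintype K),
      Module.finrank F K = 2 := by
  classical
  have hq1 : 1 < Fintype.card F := Fintype.one_lt_card
  set q := Fintype.card F with hqdef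
  obtain ⟨p, hp⟩ := CharP.exists F
  haveI := hp
  have hpprime : p.Prime := CharP.char_is_prime F p
  haveI : Fact p.Prime := ⟨hpprime⟩
  obtain ⟨k, -, hcard⟩ := FiniteField.card F p
  have hcard' : q = p ^ (k : ℕ) := by rw [hqdef, hcard]
  set g : F[X] := X ^ q ^ 2 - X with hg
  have hq2 : 1 < q ^ 2 := by nlinarith
  have hqq : q ^ 2 = p ^ (2 * (k : ℕ)) := by rw [hcard', pow_mul]; ring
  have hdvd : p ∣ q ^ 2 := by
    rw [hqq]; exact dvd_pow_self p (by positivity)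
  set K := SplittingField g with hK
  haveI : CharP K p := charP_of_injective_algebraMap (algebraMap F K).injective p
  have hsep : g.Separable := galois_poly_separable p (q ^ 2) hdvd
  have haux : g ≠ 0 := FiniteField.X_pow_card_sub_X_ne_zero _ hq2
  have hdeg : g.natDegree = q ^ 2 := FiniteField.X_pow_card_sub_X_natDegree_eq _ hq2
  have key : Fintype.card (g.rootSet K) = q ^ 2 := by
    rw [card_rootSet_eq_natDegree hsep (SplittingField.splits g), hdeg]
  have hroot : ∀ x : K, x ^ q ^ 2 = x → x ∈ g.rootSet K := by
    intro x hx
    rw [mem_rootSet_of_ne haux]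
    simp only [hg, map_sub, map_pow, aeval_X, sub_eq_zero]
    exact hx
  have hroot' : ∀ x : K, x ∈ g.rootSet K → x ^ q ^ 2 = x := by
    intro x hx
    rw [mem_rootSet_of_ne haux] at hx
    simp only [hg, map_sub, map_pow, aeval_X, sub_eq_zero] at hx
    exact hx
  have huniv : g.rootSet K = Set.univ := by
    rw [Set.eq_univ_iff_forall]
    suffices h : ∀ x, x ∈ (⊤ : Subalgebra F K) → x ∈ g.rootSet K by simpa using h
    rw [← SplittingField.adjoin_rootSet]
    simp_rw [Algebra.mem_adjoin_iff]
    intro x hx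
    refine hroot _ (Subring.closure_induction ?_ ?_ ?_ ?_ ?_ ?_ hx)
    · rintro x (⟨r, rfl⟩ | hx)
      · rw [← map_pow, FiniteField.pow_card_pow]
      · exact hroot' _ hx
    · rw [zero_pow (by positivity)]
    · rw [one_pow]
    · intro x y _ _ hx hy
      rw [hqq, add_pow_char_pow, ← hqq, hx, hy]
    · intro x _ hx
      rw [hqq, neg_pow, neg_one_pow_char_pow, ← hqq, hx, neg_one_mul]
    · intro x y _ _ hx hy
      rw [mul_pow, hx, hy]
  haveI : Finite K := Module.finite_of_finite F
  haveI : Fintype K := Fintype.ofFinite K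
  have hcardK : Fintype.card K = q ^ finrank F K := card_eq_pow_finrank
  have hKq2 : Fintype.card K = q ^ 2 := by
    have e : K ≃ g.rootSet K := (Equiv.Set.univ K).symm.trans (Equiv.setCongr huniv).symm
    exact (Fintype.card_congr e).trans key
  have hfr : finrank F K = 2 :=
    Nat.pow_right_injective hq1 (by show q ^ finrank F K = q ^ 2; rw [← hcardK, hKq2])
  exact ⟨K, inferInstance, inferInstance, inferInstance, hfr⟩

namespace EMaux
variable {F K : Type} [Field F] [Fintype F] [Field K] [Algebra F K] [Fintype K]

noncomputable def i0 (F K : Type) [Field F] [Field K] [Algebra F K] :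
    (K × K) →ₗ[F] (K × K) × F := LinearMap.inl F (K × K) F

noncomputable def p0 (F K : Type) [Field F] [Field K] [Algebra F K] :
    ((K × K) × F) →ₗ[F] F := LinearMap.snd F (K × K) F

def e0 (F K : Type) [Field F] [Field K] [Algebra F K] : (K × K) × F := (0, 1)

noncomputable def sline (l : K) (v : K × K) : Submodule F ((K × K) × F) :=
  Submodule.span F {i0 F K v, i0 F K (l • v)}

noncomputable def bline (l : K) (v : K × K) : Submodule F ((K × K) × F) :=
  Submodule.span F {i0 F K v, i0 F K (l • v) + e0 F K}

noncomputable def cline (v : K × K) : Submodule F ((K × K) × F) :=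
  Submodule.span F {i0 F K v, e0 F K}

lemma i0_apply (v : K × K) : i0 F K v = (v, 0) := rfl
lemma p0_apply (z : (K × K) × F) : p0 F K z = z.2 := rfl

lemma i0_inj : Function.Injective (i0 F K) := fun x y h => congrArg Prod.fst h

lemma rank2 {x y : (K × K) × F} (h : ∀ a b : F, a • x + b • y = 0 → a = 0 ∧ b = 0) :
    finrank F (Submodule.span F ({x, y} : Set ((K × K) × F))) = 2 := by
  have li : LinearIndependent F ![x, y] := LinearIndependent.pair_iff.mpr h
  have h2 := finrank_span_eq_card li
  rw [show Set.range ![x, y] = {x, y} by ext z; simp [Fin.exists_fin_two, or_comm]] at h2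
  simpa using h2

lemma smul_i0 (a : F) (v : K × K) : a • i0 F K v = i0 F K (a • v) :=
  ((i0 F K).map_smul a v).symm

lemma combo_smul (l : K) (a b : F) (v : K × K) :
    (algebraMap F K a + algebraMap F K b * l) • v = a • v + b • (l • v) := by
  rw [add_smul, mul_smul, algebraMap_smul, algebraMap_smul]

/-- key trick: if `i0 v` and `i0 (l•v)` are in S, so is `i0 (μ•v)` for every `μ : K`. -/
lemma scalar_combo (l : K)
    (hspan : ∀ μ : K, ∃ a b : F, μ = algebraMap F K a + algebraMap F K b * l)
    (S : Submodule F ((K × K) × F)) (v : K × K)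
    (h1 : i0 F K v ∈ S) (h2 : i0 F K (l • v) ∈ S) (μ : K) :
    i0 F K (μ • v) ∈ S := by
  obtain ⟨a, b, rfl⟩ := hspan μ
  rw [combo_smul, map_add, ← smul_i0, ← smul_i0]
  exact S.add_mem (S.smul_mem a h1) (S.smul_mem b h2)

lemma sline_rank (l : K) (hl : l ∉ Set.range (algebraMap F K)) {v : K × K} (hv : v ≠ 0) :
    finrank F (sline (F := F) l v) = 2 := by
  apply rank2
  intro a b hab
  have h0 : (algebraMap F K a + algebraMap F K b * l) • v = 0 := by
    apply i0_inj (F := F)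
    rw [map_zero, ← hab, combo_smul, map_add, ← smul_i0, ← smul_i0]
  rcases smul_eq_zero.mp h0 with hc | hc
  · by_cases hb : b = 0
    · subst hb
      simp only [map_zero, zero_mul, add_zero] at hc
      exact ⟨(algebraMap F K).injective (by simpa using hc), rfl⟩
    · exfalso
      apply hl
      refine ⟨-(b⁻¹ * a), ?_⟩
      have hbK : algebraMap F K b ≠ 0 := by
        simpa using hb
      rw [map_neg, map_mul, map_inv₀]
      field_simp
      linear_combination -hc
  · exact absurd hc hv

lemma bline_rank (l : K) {v : K × K} (hv : v ≠ 0) :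
    finrank F (bline (F := F) l v) = 2 := by
  apply rank2
  intro a b hab
  have hb : b = 0 := by
    have := congrArg (p0 F K) hab
    simpa [p0_apply, i0_apply, e0] using this
  subst hb
  simp only [zero_smul, add_zero] at hab
  rw [smul_i0] at hab
  have : a • v = 0 := i0_inj (F := F) (by rw [hab, map_zero])
  rcases smul_eq_zero.mp this with h | h
  · exact ⟨h, rfl⟩
  · exact absurd h hv

lemma cline_rank {v : K × K} (hv : v ≠ 0) :
    finrank F (cline (F := F) (K := K) v) = 2 := by
  apply rank2
  intro a b hab
  have hb : b = 0 := by
    have := congrArg (p0 F K) hab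
    simpa [p0_apply, i0_apply, e0] using this
  subst hb
  simp only [zero_smul, add_zero] at hab
  rw [smul_i0] at hab
  have : a • v = 0 := i0_inj (F := F) (by rw [hab, map_zero])
  rcases smul_eq_zero.mp this with h | h
  · exact ⟨h, rfl⟩
  · exact absurd h hv

end EMaux

namespace EMaux
set_option linter.unusedSectionVars false

variable {F K : Type} [Field F] [Fintype F] [Field K] [Algebra F K] [Fintype K]

theorem em_construction (l : K) (hl : l ∉ Set.range (algebraMap F K))
    (hspan : ∀ μ : K, ∃ a b : F, μ = algebraMap F K a + algebraMap F K b * l)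
    (hrank : finrank F K = 2) :
    ∃ B : Finset (Submodule F ((K × K) × F)),
      B.card ≤ Fintype.card F ^ 4 + 2 * Fintype.card F ^ 2 + Fintype.card F + 1 ∧
      (∀ T ∈ B, finrank F T = 2) ∧
      (∀ S : Submodule F ((K × K) × F), finrank F S = 3 → ∃ T ∈ B, T ≤ S) := by
  classical
  set q := Fintype.card F with hq
  haveI : Module.Finite F K := Module.Finite.of_finite
  have hl0 : l ≠ 0 := fun h => hl ⟨0, by rw [map_zero, h]⟩
  have hcardK : Fintype.card K = q ^ 2 := by
    rw [card_eq_pow_finrank (K := F) (V := K), hrank]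
  have hKK4 : finrank F (K × K) = 4 := by rw [finrank_prod, hrank]
  have hV5 : finrank F ((K × K) × F) = 5 := by
    rw [finrank_prod, hKK4, finrank_self]
  -- the three families
  set B0 : Finset (Submodule F ((K × K) × F)) :=
    (Finset.univ.image fun m : K => sline (F := F) l ((1 : K), m)) ∪ {sline (F := F) l ((0 : K), (1 : K))} with hB0
  set B1 : Finset (Submodule F ((K × K) × F)) :=
    (Finset.univ.erase (0 : K × K)).image (bline (F := F) l) with hB1
  set B2 : Finset (Submodule F ((K × K) × F)) :=
    ((Finset.univ.image fun a : K => cline (F := F) ((a, 1) : K × K)) ∪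
      (Finset.univ.image fun t : F => cline (F := F) ((algebraMap F K t + l, 0) : K × K))) ∪
      {cline (F := F) ((1, 0) : K × K)} with hB2
  refine ⟨B0 ∪ B1 ∪ B2, ?_, ?_, ?_⟩
  · -- cardinality
    have h0 : B0.card ≤ q ^ 2 + 1 := by
      refine (Finset.card_union_le _ _).trans ?_
      have := Finset.card_image_le (s := (Finset.univ : Finset K))
        (f := fun m : K => sline (F := F) l ((1 : K), m))
      simp only [Finset.card_univ, hcardK] at this
      simpa using add_le_add this (le_refl 1)
    have h1 : B1.card ≤ q ^ 4 - 1 := by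
      refine (Finset.card_image_le).trans ?_
      rw [Finset.card_erase_of_mem (Finset.mem_univ _), Finset.card_univ, Fintype.card_prod,
        hcardK]
      have : q ^ 2 * q ^ 2 = q ^ 4 := by ring
      rw [this]
    have h2 : B2.card ≤ (q ^ 2 + q) + 1 := by
      refine (Finset.card_union_le _ _).trans ?_
      have ha := Finset.card_image_le (s := (Finset.univ : Finset K))
        (f := fun a : K => cline (F := F) ((a, 1) : K × K))
      have hb := Finset.card_image_le (s := (Finset.univ : Finset F))
        (f := fun t : F => cline (F := F) ((algebraMap F K t + l, 0) : K × K))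
      simp only [Finset.card_univ, hcardK, ← hq] at ha hb
      have := Finset.card_union_le
        (Finset.univ.image fun a : K => cline (F := F) ((a, 1) : K × K))
        (Finset.univ.image fun t : F => cline (F := F) ((algebraMap F K t + l, 0) : K × K))
      simp only [Finset.card_singleton]
      omega
    have hq1 : 1 ≤ q ^ 4 := Nat.one_le_pow _ _ Fintype.card_pos
    have := (Finset.card_union_le (B0 ∪ B1) B2).trans
      (add_le_add ((Finset.card_union_le B0 B1).trans (add_le_add h0 h1)) h2)
    omega
  · -- all members have rank two
    intro T hT
    simp only [Finset.mem_union, hB0, hB1, hB2, Finset.mem_image, Finset.mem_singleton,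
      Finset.mem_erase, Finset.mem_univ, true_and] at hT
    rcases hT with ((⟨m, -, rfl⟩ | rfl) | ⟨v, ⟨hv, -⟩, rfl⟩) | ((⟨a, -, rfl⟩ | ⟨t, -, rfl⟩) | rfl)
    · exact sline_rank l hl (by simp)
    · exact sline_rank l hl (by simp)
    · exact bline_rank l hv
    · exact cline_rank (by simp)
    · refine cline_rank ?_
      intro h
      apply hl
      refine ⟨-t, ?_⟩
      have := congrArg Prod.fst h
      simp only [Prod.fst_zero] at this
      rw [map_neg]
      linear_combination -this
    · exact cline_rank (by simp)
  · -- blocking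
    intro S hS3
    haveI : FiniteDimensional F ((K × K) × F) := by infer_instance
    -- spread step
    have spread_step : ∀ v : K × K, v ≠ 0 → i0 F K v ∈ S → i0 F K (l • v) ∈ S →
        ∃ T ∈ B0 ∪ B1 ∪ B2, T ≤ S := by
      intro v hv0 h1 h2
      by_cases hv1 : v.1 ≠ 0
      · refine ⟨sline (F := F) l ((1 : K), v.1⁻¹ * v.2), ?_, ?_⟩
        · apply Finset.mem_union_left; apply Finset.mem_union_left
          rw [hB0]
          exact Finset.mem_union_left _ (Finset.mem_image.mpr ⟨v.1⁻¹ * v.2, Finset.mem_univ _, rfl⟩)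
        · have hveq : ((1 : K), v.1⁻¹ * v.2) = v.1⁻¹ • v := by
            rw [Prod.smul_def]
            exact Prod.ext (by simp [inv_mul_cancel₀ hv1]) rfl
          rw [sline, Submodule.span_le]
          rintro z hz
          rcases hz with rfl | hz
          · rw [hveq]
            exact scalar_combo l hspan S v h1 h2 _
          · rcases hz with rfl
            rw [hveq, smul_comm, ← mul_smul]
            exact scalar_combo l hspan S v h1 h2 _
      · push_neg at hv1
        have hv2 : v.2 ≠ 0 := by
          intro h2'
          exact hv0 (Prod.ext hv1 h2')
        refine ⟨sline (F := F) l ((0 : K), (1 : K)), ?_, ?_⟩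
        · apply Finset.mem_union_left; apply Finset.mem_union_left
          rw [hB0]
          exact Finset.mem_union_right _ (Finset.mem_singleton_self _)
        · have hveq : ((0 : K), (1 : K)) = v.2⁻¹ • v := by
            rw [Prod.smul_def]
            exact Prod.ext (by simp [hv1]) (by simp [inv_mul_cancel₀ hv2])
          rw [sline, Submodule.span_le]
          rintro z hz
          rcases hz with rfl | hz
          · rw [hveq]
            exact scalar_combo l hspan S v h1 h2 _
          · rcases hz with rfl
            rw [hveq, smul_comm, ← mul_smul]
            exact scalar_combo l hspan S v h1 h2 _
    set mlam : (K × K) ≃ₗ[F] (K × K) :=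
      (LinearEquiv.smulOfNeZero K (K × K) l hl0).restrictScalars F with hmlam
    have hmlam_apply : ∀ z : K × K, mlam z = l • z := fun z => rfl
    by_cases hSH : ∀ s ∈ S, p0 F K s = 0
    · -- Case A : S is inside the hyperplane
      set S' : Submodule F (K × K) := S.comap (i0 F K) with hS'
      have hmap : S'.map (i0 F K) = S := by
        apply le_antisymm
        · exact Submodule.map_comap_le _ _
        · intro s hs
          have h2 : s.2 = 0 := hSH s hs
          refine ⟨s.1, ?_, Prod.ext rfl h2.symm⟩
          show i0 F K s.1 ∈ S
          have heq : i0 F K s.1 = s := Prod.ext rfl h2.symm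
          rwa [heq]
      have hS'3 : finrank F S' = 3 := by
        have h := LinearEquiv.finrank_eq
          (Submodule.equivMapOfInjective (i0 F K) (i0_inj (F := F)) S')
        rw [hmap] at h
        rw [h, hS3]
      set T' : Submodule F (K × K) := S'.comap (mlam : (K × K) →ₗ[F] (K × K)) with hT'
      have hT'3 : finrank F T' = 3 := by
        rw [hT', Submodule.comap_equiv_eq_map_symm, LinearEquiv.finrank_map_eq, hS'3]
      have hint : 1 ≤ finrank F (S' ⊓ T' : Submodule F (K × K)) := by
        have h1 := Submodule.finrank_sup_add_finrank_inf_eq S' T'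
        have h2 : finrank F (S' ⊔ T' : Submodule F (K × K)) ≤ finrank F (K × K) :=
          Submodule.finrank_le _
        rw [hKK4] at h2
        omega
      have hne : (S' ⊓ T' : Submodule F (K × K)) ≠ ⊥ := by
        intro h
        rw [h, finrank_bot] at hint
        omega
      obtain ⟨v, hvmem, hv0⟩ := (Submodule.ne_bot_iff _).mp hne
      obtain ⟨hv1, hv2⟩ := hvmem
      exact spread_step v hv0 hv1 hv2
    · push_neg at hSH
      obtain ⟨w0, hw0S, hw0⟩ := hSH
      set w : (K × K) × F := (p0 F K w0)⁻¹ • w0 with hw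
      have hwS : w ∈ S := S.smul_mem _ hw0S
      have hpw : p0 F K w = 1 := by
        rw [hw, map_smul, smul_eq_mul, inv_mul_cancel₀ hw0]
      set u : K × K := w.1 with hu
      have hwdecomp : w = i0 F K u + e0 F K := by
        have h2 : w.2 = 1 := hpw
        exact Prod.ext (by simp [i0_apply, e0, hu]) (by simp [i0_apply, e0, h2])
      set L' : Submodule F (K × K) := S.comap (i0 F K) with hL'
      have hrange : LinearMap.range (i0 F K) = LinearMap.ker (p0 F K) := by
        ext z
        constructor
        · rintro ⟨x, rfl⟩
          simp [i0_apply, p0_apply, LinearMap.mem_ker]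
        · intro hz
          have h2 : z.2 = 0 := by simpa [LinearMap.mem_ker, p0_apply] using hz
          exact ⟨z.1, Prod.ext rfl h2.symm⟩
      have hker4 : finrank F (LinearMap.ker (p0 F K)) = 4 := by
        rw [← hrange, LinearMap.finrank_range_of_inj (i0_inj (F := F)), hKK4]
      have hsup : S ⊔ LinearMap.ker (p0 F K) = ⊤ := by
        rw [eq_top_iff]
        intro z _
        have hz1 : (p0 F K z) • w ∈ S := S.smul_mem _ hwS
        have hz2 : z - (p0 F K z) • w ∈ LinearMap.ker (p0 F K) := by
          rw [LinearMap.mem_ker, map_sub, map_smul, hpw, smul_eq_mul, mul_one, sub_self]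
        have h := Submodule.add_mem_sup hz1 hz2
        simpa using h
      have hL'2 : finrank F L' = 2 := by
        have e1 := LinearEquiv.finrank_eq
          (Submodule.equivMapOfInjective (i0 F K) (i0_inj (F := F)) L')
        have e2 : L'.map (i0 F K) = LinearMap.range (i0 F K) ⊓ S := by
          rw [hL', Submodule.map_comap_eq]
        have e3 := Submodule.finrank_sup_add_finrank_inf_eq S (LinearMap.ker (p0 F K))
        rw [hsup, finrank_top, hV5, hS3, hker4] at e3
        rw [e1, e2, hrange, inf_comm]
        omega
      by_cases hA : ∃ v : K × K, v ≠ 0 ∧ v ∈ L' ∧ l • v ∈ L'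
      · obtain ⟨v, hv0, h1, h2⟩ := hA
        exact spread_step v hv0 h1 h2
      · push_neg at hA
        set M : Submodule F (K × K) := L'.map (mlam : (K × K) →ₗ[F] (K × K)) with hM
        have hdisj : L' ⊓ M = ⊥ := by
          rw [eq_bot_iff]
          rintro x ⟨hx1, hx2⟩
          obtain ⟨v', hv', rfl⟩ := hx2
          rcases eq_or_ne v' 0 with rfl | hne
          · simp
          · have hx1' : l • v' ∈ L' := hx1
            exact absurd hx1' (hA v' hne hv')
        have hM2 : finrank F M = 2 := by
          rw [hM, LinearEquiv.finrank_map_eq, hL'2]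
        have hsupM : L' ⊔ M = ⊤ := by
          apply Submodule.eq_top_of_finrank_eq
          have e3 := Submodule.finrank_sup_add_finrank_inf_eq L' M
          rw [hdisj, finrank_bot, hL'2, hM2] at e3
          rw [hKK4]
          omega
        have hu' : u ∈ L' ⊔ M := by rw [hsupM]; exact Submodule.mem_top
        rw [Submodule.mem_sup] at hu'
        obtain ⟨x, hx, z, hz, hxz⟩ := hu'
        obtain ⟨v, hvL, rfl⟩ := hz
        rcases eq_or_ne v 0 with rfl | hv0
        · -- the plane contains e0 : use a cline
          have hux : u = x := by rw [← hxz]; simp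
          have hiu : i0 F K u ∈ S := by rw [hux]; exact hx
          have he0 : e0 F K ∈ S := by
            have h : e0 F K = w - i0 F K u := by rw [hwdecomp]; abel
            rw [h]; exact S.sub_mem hwS hiu
          set RF : Submodule F K := LinearMap.range (Algebra.linearMap F K) with hRF
          have hRF1 : finrank F RF = 1 := by
            rw [hRF, LinearMap.finrank_range_of_inj, finrank_self]
            intro a b hab
            exact (algebraMap F K).injective (by simpa using hab)
          set psi : (K × K) →ₗ[F] (K ⧸ RF) := RF.mkQ ∘ₗ LinearMap.snd F K K with hpsi
          have hkerpsi : 3 ≤ finrank F (LinearMap.ker psi) := by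
            have e4 := LinearMap.finrank_range_add_finrank_ker psi
            have e5 : finrank F (LinearMap.range psi) ≤ finrank F (K ⧸ RF) :=
              Submodule.finrank_le _
            have e6 : finrank F (K ⧸ RF) + finrank F RF = finrank F K :=
              Submodule.finrank_quotient_add_finrank RF
            rw [hrank] at e6
            rw [hKK4] at e4
            omega
          have hint2 : 1 ≤ finrank F (L' ⊓ LinearMap.ker psi : Submodule F (K × K)) := by
            have e7 := Submodule.finrank_sup_add_finrank_inf_eq L' (LinearMap.ker psi)
            have e8 : finrank F (L' ⊔ LinearMap.ker psi : Submodule F (K × K)) ≤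
                finrank F (K × K) := Submodule.finrank_le _
            rw [hKK4] at e8
            omega
          have hne2 : (L' ⊓ LinearMap.ker psi : Submodule F (K × K)) ≠ ⊥ := by
            intro h
            rw [h, finrank_bot] at hint2
            omega
          obtain ⟨z0, hz0mem, hz00⟩ := (Submodule.ne_bot_iff _).mp hne2
          obtain ⟨hz0L, hz0k⟩ := hz0mem
          have hz02mem : z0.2 ∈ RF := by
            have h8 : RF.mkQ z0.2 = 0 := hz0k
            simpa [Submodule.mkQ_apply, Submodule.Quotient.mk_eq_zero] using h8
          obtain ⟨c, hc⟩ := hz02mem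
          have hc' : algebraMap F K c = z0.2 := by simpa using hc
          have hiz0 : i0 F K z0 ∈ S := hz0L
          have cfinish : ∀ v' : K × K, (∃ d : F, d • z0 = v') →
              cline (F := F) v' ∈ B2 → ∃ T ∈ B0 ∪ B1 ∪ B2, T ≤ S := by
            rintro v' ⟨d, rfl⟩ hmem
            refine ⟨cline (F := F) (d • z0), Finset.mem_union_right _ hmem, ?_⟩
            rw [cline, Submodule.span_le]
            rintro y (rfl | hy)
            · rw [← smul_i0]
              exact S.smul_mem d hiz0
            · rcases hy with rfl
              exact he0
          by_cases hcne : c = 0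
          · -- z0.2 = 0, use the second/third families
            have hz02 : z0.2 = 0 := by rw [← hc', hcne, map_zero]
            have hz01 : z0.1 ≠ 0 := by
              intro h
              exact hz00 (Prod.ext h hz02)
            obtain ⟨a, b, hab⟩ := hspan z0.1
            by_cases hb : b = 0
            · have ha : z0.1 = algebraMap F K a := by
                rw [hab, hb, map_zero, zero_mul, add_zero]
              have ha0 : a ≠ 0 := by
                intro h
                rw [h, map_zero] at ha
                exact hz01 ha
              refine cfinish ((1 : K), (0 : K)) ⟨a⁻¹, ?_⟩ ?_
              · apply Prod.ext
                · show a⁻¹ • z0.1 = 1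
                  rw [ha, Algebra.smul_def, ← map_mul, inv_mul_cancel₀ ha0, map_one]
                · show a⁻¹ • z0.2 = 0
                  rw [hz02, smul_zero]
              · rw [hB2]
                exact Finset.mem_union_right _ (Finset.mem_singleton_self _)
            · refine cfinish ((algebraMap F K (b⁻¹ * a) + l, 0)) ⟨b⁻¹, ?_⟩ ?_
              · apply Prod.ext
                · show b⁻¹ • z0.1 = algebraMap F K (b⁻¹ * a) + l
                  rw [hab, Algebra.smul_def, mul_add, ← map_mul, ← mul_assoc, ← map_mul,
                    inv_mul_cancel₀ hb, map_one, one_mul]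
                · show b⁻¹ • z0.2 = 0
                  rw [hz02, smul_zero]
              · rw [hB2]
                refine Finset.mem_union_left _ (Finset.mem_union_right _ ?_)
                exact Finset.mem_image.mpr ⟨b⁻¹ * a, Finset.mem_univ _, rfl⟩
          · refine cfinish ((c⁻¹ • z0.1, (1 : K))) ⟨c⁻¹, ?_⟩ ?_
            · apply Prod.ext
              · rfl
              · show c⁻¹ • z0.2 = 1
                rw [← hc', Algebra.smul_def, ← map_mul, inv_mul_cancel₀ hcne, map_one]
            · rw [hB2]
              refine Finset.mem_union_left _ (Finset.mem_union_left _ ?_)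
              exact Finset.mem_image.mpr ⟨c⁻¹ • z0.1, Finset.mem_univ _, rfl⟩
        · -- v ≠ 0 : use a bline
          refine ⟨bline (F := F) l v, ?_, ?_⟩
          · apply Finset.mem_union_left
            apply Finset.mem_union_right
            rw [hB1]
            exact Finset.mem_image.mpr ⟨v, Finset.mem_erase.mpr ⟨hv0, Finset.mem_univ _⟩, rfl⟩
          · rw [bline, Submodule.span_le]
            rintro y (rfl | hy)
            · exact hvL
            · rcases hy with rfl
              have hxz' : x + l • v = u := hxz
              have h : i0 F K (l • v) + e0 F K = w - i0 F K x := by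
                rw [hwdecomp, ← hxz', map_add]
                abel
              rw [h]
              exact S.sub_mem hwS hx

theorem exists_l (hrank : finrank F K = 2) :
    ∃ l : K, l ∉ Set.range (algebraMap F K) ∧
      ∀ μ : K, ∃ a b : F, μ = algebraMap F K a + algebraMap F K b * l := by
  haveI : Module.Finite F K := Module.Finite.of_finite
  have h1 : finrank F (Submodule.span F {(1 : K)}) = 1 := finrank_span_singleton one_ne_zero
  have hne : Submodule.span F {(1 : K)} ≠ ⊤ := by
    intro h
    rw [h, finrank_top, hrank] at h1
    omega
  obtain ⟨l, hlmem⟩ : ∃ l : K, l ∉ Submodule.span F {(1 : K)} := by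
    by_contra h
    push_neg at h
    exact hne (Submodule.eq_top_iff'.mpr h)
  have hlr : l ∉ Set.range (algebraMap F K) := by
    rintro ⟨a, rfl⟩
    exact hlmem (Submodule.mem_span_singleton.mpr ⟨a, by rw [Algebra.smul_def, mul_one]⟩)
  refine ⟨l, hlr, ?_⟩
  have hP : Submodule.span F {(1 : K), l} = ⊤ := by
    by_contra h
    have hlt : Submodule.span F {(1 : K), l} < ⊤ := lt_top_iff_ne_top.mpr h
    have h2 := Submodule.finrank_lt hlt.ne
    rw [hrank] at h2
    have hle : Submodule.span F {(1 : K)} ≤ Submodule.span F {(1 : K), l} :=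
      Submodule.span_mono (Set.singleton_subset_iff.mpr (Set.mem_insert _ _))
    have heq := Submodule.eq_of_le_of_finrank_le hle (by rw [h1]; omega)
    apply hlmem
    rw [heq]
    exact Submodule.subset_span (Set.mem_insert_iff.mpr (Or.inr rfl))
  intro μ
  have hμ : μ ∈ Submodule.span F {(1 : K), l} := hP ▸ Submodule.mem_top
  obtain ⟨a, b, hab⟩ := Submodule.mem_span_pair.mp hμ
  exact ⟨a, b, by rw [← hab, Algebra.smul_def, mul_one, Algebra.smul_def]⟩

end EMaux

end EMall

/-- `fBlock F n` is the minimum size of a set of 2-dimensional subspaces of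
`F^(n+1)` such that every 3-dimensional subspace contains a member, i.e. the
minimum size of a (2,1)-blocking set in `PG(n, |F|)`. -/
noncomputable def fBlock (F : Type) [Field F] [Fintype F] (n : ℕ) : ℕ :=
  sInf {m : ℕ | ∃ B : Finset (Submodule F (Fin (n + 1) → F)),
    B.card = m ∧ (∀ T ∈ B, Module.finrank F T = 2) ∧
    (∀ S : Submodule F (Fin (n + 1) → F), Module.finrank F S = 3 →
      ∃ T ∈ B, T ≤ S)}

theorem stmt15 (F : Type) [Field F] [Fintype F] (q : ℕ) (hq : Fintype.card F = q) :
    fBlock F 4 ≤ q ^ 4 + 2 * q ^ 2 + q + 1 := by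
  classical
  obtain ⟨K, _, _, _, hrank⟩ := exists_quad_ext F
  obtain ⟨l, hl, hspan⟩ := EMaux.exists_l (F := F) (K := K) hrank
  obtain ⟨B, hBcard, hBrank, hBblock⟩ := EMaux.em_construction l hl hspan hrank
  haveI : Module.Finite F K := Module.Finite.of_finite
  have hV5 : Module.finrank F ((K × K) × F) = 5 := by
    rw [Module.finrank_prod, Module.finrank_prod, hrank, Module.finrank_self]
  have h5 : Module.finrank F (Fin (4 + 1) → F) = 5 := by simp
  let E : ((K × K) × F) ≃ₗ[F] (Fin (4 + 1) → F) :=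
    LinearEquiv.ofFinrankEq _ _ (by rw [hV5, h5])
  set B' := B.image (Submodule.map (E : ((K × K) × F) →ₗ[F] Fin (4 + 1) → F)) with hB'
  have hfb : fBlock F 4 ≤ B'.card := by
    apply Nat.sInf_le
    refine ⟨B', rfl, ?_, ?_⟩
    · intro T hT
      obtain ⟨T0, hT0, rfl⟩ := Finset.mem_image.mp hT
      rw [LinearEquiv.finrank_map_eq E T0]
      exact hBrank T0 hT0
    · intro S hS
      have hS' : Module.finrank F
          (S.map (E.symm : (Fin (4 + 1) → F) →ₗ[F] ((K × K) × F))) = 3 := by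
        rw [LinearEquiv.finrank_map_eq, hS]
      obtain ⟨T, hT, hTle⟩ := hBblock _ hS'
      refine ⟨T.map (E : ((K × K) × F) →ₗ[F] Fin (4 + 1) → F),
        Finset.mem_image_of_mem _ hT, ?_⟩
      have h2 := Submodule.map_mono (f := (E : ((K × K) × F) →ₗ[F] Fin (4 + 1) → F)) hTle
      have h3 : (S.map (E.symm : (Fin (4 + 1) → F) →ₗ[F] ((K × K) × F))).map
          (E : ((K × K) × F) →ₗ[F] Fin (4 + 1) → F) = S := by
        ext y
        simp only [Submodule.mem_map]
        constructor
        · rintro ⟨x, ⟨z, hz, rfl⟩, rfl⟩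
          simpa using hz
        · intro hy
          exact ⟨E.symm y, ⟨y, hy, rfl⟩, by simp⟩
      rwa [h3] at h2
  refine hfb.trans ((Finset.card_image_le).trans ?_)
  rw [hq] at hBcard
  exact hBcard
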